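/- Let p be a prime and n ≥ 1 a natural number. The set K₁(pⁿ) of matrices [[a, b], [c, d]] in GL₂(ℤ_p) with c ∈ pⁿℤ_p and d − 1 ∈ pⁿℤ_p is a subgroup of GL₂(ℤ_p), and it is generated (as a subgroup) by the set consisting of all matrices of the four forms [[1, x], [0, 1]] with x ∈ ℤ_p, [[y, 0], [0, 1]] with y ∈ ℤ_p^×, [[1, 0], [0, d]] with d ∈ 1 + pⁿℤ_p, and [[1, 0], [a, 1]] with a ∈ pⁿℤ_p. -/

import Mathlib

open Matrix

namespace K1Aux

variable {p : ℕ} [Fact p.Prime]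

lemma isUnit_of_not_dvd {z : ℤ_[p]} (h : ¬ (p : ℤ_[p]) ∣ z) : IsUnit z := by
  by_contra hz
  exact h ((PadicInt.norm_lt_one_iff_dvd z).mp (PadicInt.not_isUnit_iff.mp hz))

noncomputable def upperU (x : ℤ_[p]) : (Matrix (Fin 2) (Fin 2) ℤ_[p])ˣ :=
  ⟨!![1, x; 0, 1], !![1, -x; 0, 1],
    by rw [Matrix.mul_fin_two, Matrix.one_fin_two]; norm_num,
    by rw [Matrix.mul_fin_two, Matrix.one_fin_two]; norm_num⟩

noncomputable def lowerU (t : ℤ_[p]) : (Matrix (Fin 2) (Fin 2) ℤ_[p])ˣ :=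
  ⟨!![1, 0; t, 1], !![1, 0; -t, 1],
    by rw [Matrix.mul_fin_two, Matrix.one_fin_two]; norm_num,
    by rw [Matrix.mul_fin_two, Matrix.one_fin_two]; norm_num⟩

noncomputable def diagU (u v : ℤ_[p]ˣ) : (Matrix (Fin 2) (Fin 2) ℤ_[p])ˣ :=
  ⟨!![(u : ℤ_[p]), 0; 0, (v : ℤ_[p])], !![((u⁻¹ : ℤ_[p]ˣ) : ℤ_[p]), 0; 0, ((v⁻¹ : ℤ_[p]ˣ) : ℤ_[p])],
    by rw [Matrix.mul_fin_two, Matrix.one_fin_two]; norm_num,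
    by rw [Matrix.mul_fin_two, Matrix.one_fin_two]; norm_num⟩

@[simp] lemma upperU_val (x : ℤ_[p]) : (upperU x : Matrix (Fin 2) (Fin 2) ℤ_[p]) = !![1, x; 0, 1] := rfl
@[simp] lemma lowerU_val (t : ℤ_[p]) : (lowerU t : Matrix (Fin 2) (Fin 2) ℤ_[p]) = !![1, 0; t, 1] := rfl
@[simp] lemma diagU_val (u v : ℤ_[p]ˣ) :
    (diagU u v : Matrix (Fin 2) (Fin 2) ℤ_[p]) = !![(u : ℤ_[p]), 0; 0, (v : ℤ_[p])] := rfl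

def K1 (n : ℕ) (hn : 1 ≤ n) : Subgroup ((Matrix (Fin 2) (Fin 2) ℤ_[p])ˣ) where
  carrier := {A : (Matrix (Fin 2) (Fin 2) ℤ_[p])ˣ |
          (p : ℤ_[p]) ^ n ∣ (A : Matrix (Fin 2) (Fin 2) ℤ_[p]) 1 0 ∧
          (p : ℤ_[p]) ^ n ∣ ((A : Matrix (Fin 2) (Fin 2) ℤ_[p]) 1 1 - 1)}
  one_mem' := by simp
  mul_mem' := by
    rintro A B ⟨hA1, hA2⟩ ⟨hB1, hB2⟩
    constructor
    · show (p : ℤ_[p]) ^ n ∣ (A.val * B.val) 1 0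
      rw [Matrix.mul_apply, Fin.sum_univ_two]
      exact dvd_add (hA1.mul_right _) (hB1.mul_left _)
    · show (p : ℤ_[p]) ^ n ∣ (A.val * B.val) 1 1 - 1
      rw [Matrix.mul_apply, Fin.sum_univ_two]
      have : A.val 1 0 * B.val 0 1 + A.val 1 1 * B.val 1 1 - 1 =
          A.val 1 0 * B.val 0 1 + (A.val 1 1 - 1) * B.val 1 1 + (B.val 1 1 - 1) := by ring
      rw [this]
      exact dvd_add (dvd_add (hA1.mul_right _) (hA2.mul_right _)) hB2
  inv_mem' := by
    rintro A ⟨h1, h2⟩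
    have hBA : (A⁻¹).val * A.val = 1 := by
      rw [← Units.val_mul, inv_mul_cancel]; rfl
    set B := (A⁻¹).val with hB
    have e10 : B 1 0 * A.val 0 0 + B 1 1 * A.val 1 0 = 0 := by
      have := congrFun (congrFun hBA 1) 0
      simpa [Matrix.mul_apply, Fin.sum_univ_two, Matrix.one_apply] using this
    have e11 : B 1 0 * A.val 0 1 + B 1 1 * A.val 1 1 = 1 := by
      have := congrFun (congrFun hBA 1) 1
      simpa [Matrix.mul_apply, Fin.sum_univ_two, Matrix.one_apply] using this
    have hdet : IsUnit A.val.det := (Matrix.isUnit_iff_isUnit_det A.val).mp A.isUnit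
    have hp : (p : ℤ_[p]) ∣ (p : ℤ_[p]) ^ n := dvd_pow_self _ (by omega)
    have hpc : (p : ℤ_[p]) ∣ A.val 1 0 := hp.trans h1
    have hA00 : IsUnit (A.val 0 0) := by
      apply isUnit_of_not_dvd
      intro hdiv
      have hd : (p : ℤ_[p]) ∣ A.val.det := by
        rw [Matrix.det_fin_two]
        exact dvd_sub (hdiv.mul_right _) (hpc.mul_left _)
      exact (mem_nonunits_iff.mp PadicInt.p_nonunit) (isUnit_of_dvd_unit hd hdet)
    obtain ⟨u, hu⟩ := hA00
    have hB10 : (p : ℤ_[p]) ^ n ∣ B 1 0 := by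
      have : B 1 0 * A.val 0 0 = -(B 1 1 * A.val 1 0) := by linear_combination e10
      have hdvd : (p : ℤ_[p]) ^ n ∣ B 1 0 * A.val 0 0 := by
        rw [this]; exact (h1.mul_left _).neg_right
      rw [← hu] at hdvd
      exact (Units.dvd_mul_right).mp hdvd
    refine ⟨hB10, ?_⟩
    have : B 1 1 - 1 = -(B 1 0 * A.val 0 1) - B 1 1 * (A.val 1 1 - 1) := by
      linear_combination e11
    rw [this]
    exact dvd_sub ((hB10.mul_right _).neg_right) (h2.mul_left _)

end K1Aux

open K1Aux in
theorem K1_is_generated {p : ℕ} [Fact p.Prime] (n : ℕ) (hn : 1 ≤ n) :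
    ∃ H : Subgroup ((Matrix (Fin 2) (Fin 2) ℤ_[p])ˣ),
      (H : Set ((Matrix (Fin 2) (Fin 2) ℤ_[p])ˣ)) =
        {A : (Matrix (Fin 2) (Fin 2) ℤ_[p])ˣ |
          (p : ℤ_[p]) ^ n ∣ (A : Matrix (Fin 2) (Fin 2) ℤ_[p]) 1 0 ∧
          (p : ℤ_[p]) ^ n ∣ ((A : Matrix (Fin 2) (Fin 2) ℤ_[p]) 1 1 - 1)} ∧
      H = Subgroup.closure
        {A : (Matrix (Fin 2) (Fin 2) ℤ_[p])ˣ |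
          (∃ x : ℤ_[p], (A : Matrix (Fin 2) (Fin 2) ℤ_[p]) = !![1, x; 0, 1]) ∨
          (∃ y : ℤ_[p]ˣ, (A : Matrix (Fin 2) (Fin 2) ℤ_[p]) = !![(y : ℤ_[p]), 0; 0, 1]) ∨
          (∃ d : ℤ_[p], (p : ℤ_[p]) ^ n ∣ (d - 1) ∧
            (A : Matrix (Fin 2) (Fin 2) ℤ_[p]) = !![1, 0; 0, d]) ∨
          (∃ a : ℤ_[p], (p : ℤ_[p]) ^ n ∣ a ∧
            (A : Matrix (Fin 2) (Fin 2) ℤ_[p]) = !![1, 0; a, 1])} := by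
  refine ⟨K1 n hn, rfl, ?_⟩
  apply le_antisymm
  · -- K1 ≤ closure S
    intro A hA
    obtain ⟨hc, hd1⟩ := hA
    set a := (A : Matrix (Fin 2) (Fin 2) ℤ_[p]) 0 0 with ha
    set b := (A : Matrix (Fin 2) (Fin 2) ℤ_[p]) 0 1 with hb
    set c := (A : Matrix (Fin 2) (Fin 2) ℤ_[p]) 1 0 with hcdef
    set d := (A : Matrix (Fin 2) (Fin 2) ℤ_[p]) 1 1 with hddef
    have hp : (p : ℤ_[p]) ∣ (p : ℤ_[p]) ^ n := dvd_pow_self _ (by omega)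
    have hd : IsUnit d := by
      apply isUnit_of_not_dvd
      intro hdiv
      have : (p : ℤ_[p]) ∣ 1 := by
        have := dvd_sub hdiv (hp.trans hd1)
        simpa using this
      exact (mem_nonunits_iff.mp PadicInt.p_nonunit) (isUnit_of_dvd_one this)
    set du := hd.unit with hdu
    set di := ((du⁻¹ : ℤ_[p]ˣ) : ℤ_[p]) with hdi
    have hdd : d * di = 1 := by
      have := du.mul_inv
      rwa [hd.unit_spec] at this
    have hdet : IsUnit (A : Matrix (Fin 2) (Fin 2) ℤ_[p]).det :=
      (Matrix.isUnit_iff_isUnit_det _).mp A.isUnit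
    have hdet2 : (A : Matrix (Fin 2) (Fin 2) ℤ_[p]).det = a * d - b * c :=
      Matrix.det_fin_two _
    set yu := hdet.unit * du⁻¹ with hyu
    have hyuv : (yu : ℤ_[p]) = (A : Matrix (Fin 2) (Fin 2) ℤ_[p]).det * di := by
      rw [hyu, Units.val_mul, hdet.unit_spec]
    have hval : ((upperU (b * di) * diagU yu 1 * diagU 1 du * lowerU (di * c)) :
        Matrix (Fin 2) (Fin 2) ℤ_[p]) = !![a, b; c, d] := by
      simp only [Units.val_mul, upperU_val, diagU_val, lowerU_val, Units.val_one]
      rw [Matrix.mul_fin_two, Matrix.mul_fin_two, Matrix.mul_fin_two]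
      ext i j
      fin_cases i <;> fin_cases j <;>
        simp only [Matrix.cons_val', Matrix.cons_val_zero, Matrix.cons_val_one,
          Matrix.head_cons, Matrix.head_fin_const, Matrix.empty_val',
          Matrix.cons_val_fin_one, Fin.mk_zero, Fin.mk_one, Matrix.cons_val_zero,
          Matrix.of_apply]
      · rw [hyuv, hd.unit_spec, hdet2]; ring_nf; linear_combination (a + b * c * di) * hdd
      · rw [hd.unit_spec]; ring_nf; linear_combination b * hdd
      · rw [hd.unit_spec]; ring_nf; linear_combination c * hdd
      · rw [hd.unit_spec]; ring
    have hGmem : A = upperU (b * di) * diagU yu 1 * diagU 1 du * lowerU (di * c) :=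
      Units.ext ((Matrix.eta_fin_two _).trans hval.symm)
    rw [hGmem]
    refine mul_mem (mul_mem (mul_mem ?_ ?_) ?_) ?_ <;> apply Subgroup.subset_closure
    · exact Or.inl ⟨b * di, by simp⟩
    · exact Or.inr (Or.inl ⟨yu, by simp⟩)
    · refine Or.inr (Or.inr (Or.inl ⟨d, hd1, by simp [hdu, hd.unit_spec]⟩))
    · exact Or.inr (Or.inr (Or.inr ⟨di * c, hc.mul_left _, by simp⟩))
  · -- closure S ≤ K1
    rw [Subgroup.closure_le]
    rintro A (⟨x, hx⟩ | ⟨y, hy⟩ | ⟨d, hd, hA⟩ | ⟨a, haa, hA⟩)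
    · constructor <;> simp [hx]
    · constructor <;> simp [hy]
    · constructor <;> simp [hA, hd]
    · constructor <;> simp [hA, haa]
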